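/- Let g : [0,∞) → ℝ be nonnegative and differentiable satisfying ġ(t) ≤ α(t, g(t)) + β(t), where α, β satisfy the Example 2 bounds α(t,y) ≤ θC|y|^p·bλ/((λ+c)(1+t)^{1+b}) and β(t) ≤ (1-θ)bλ/((c+λ)²(1+t)^{1+b}) with C as in Example 2. If g(0) < 1/(c+λ), then g(t) ≤ 1/(c + λ(1+t)^{-b}) < 1/c for all t > 0. -/

import Mathlib

open Set

lemma keylem15 (c l p : ℝ) (hc : 0 < c) (hl : 0 < l) (hp : 0 < p)
    (C : ℝ) (hC : C = if 1 < p then c ^ (p - 1) else (l + c) ^ (p - 1))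
    (y : ℝ) (h1 : (l + c)⁻¹ ≤ y) (h2 : y ≤ c⁻¹) :
    C * y ^ (p - 2) ≤ l + c := by
  have hlc : (0:ℝ) < l + c := by linarith
  have hy : 0 < y := lt_of_lt_of_le (by positivity) h1
  rcases le_or_gt 2 p with h2p | h2p
  · rw [hC, if_pos (by linarith)]
    have hyp : y ^ (p - 2) ≤ (c⁻¹) ^ (p - 2) := Real.rpow_le_rpow hy.le h2 (by linarith)
    have h3 : (c⁻¹ : ℝ) ^ (p - 2) = c ^ (-(p - 2)) := by
      rw [Real.inv_rpow hc.le, ← Real.rpow_neg hc.le]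
    calc c ^ (p - 1) * y ^ (p - 2) ≤ c ^ (p - 1) * (c⁻¹) ^ (p - 2) :=
          mul_le_mul_of_nonneg_left hyp (Real.rpow_nonneg hc.le _)
      _ = c ^ (p - 1 + -(p - 2)) := by rw [h3, ← Real.rpow_add hc]
      _ = c := by norm_num
      _ ≤ l + c := by linarith
  · have hC0 : C ≤ (l + c) ^ (p - 1) := by
      rw [hC]; split_ifs with h
      · exact Real.rpow_le_rpow hc.le (by linarith) (by linarith)
      · exact le_rfl
    have hyp : y ^ (p - 2) ≤ ((l + c)⁻¹) ^ (p - 2) :=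
      Real.rpow_le_rpow_of_nonpos (by positivity) h1 (by linarith)
    have h3 : ((l + c)⁻¹ : ℝ) ^ (p - 2) = (l + c) ^ (-(p - 2)) := by
      rw [Real.inv_rpow hlc.le, ← Real.rpow_neg hlc.le]
    calc C * y ^ (p - 2) ≤ (l + c) ^ (p - 1) * ((l + c)⁻¹) ^ (p - 2) := by
          apply mul_le_mul hC0 hyp (Real.rpow_nonneg hy.le _) (Real.rpow_nonneg hlc.le _)
      _ = (l + c) ^ (p - 1 + -(p - 2)) := by rw [h3, ← Real.rpow_add hlc]
      _ = l + c := by norm_num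

set_option maxHeartbeats 2000000 in
/-- Example 2 conclusion: `g(t) ≤ 1/(c + λ(1+t)^{-b}) < 1/c` for all `t > 0`. -/
theorem stmt15
    (c l b θ p : ℝ) (hc : 0 < c) (hl : 0 < l) (hb : 0 < b)
    (hθ : θ ∈ Set.Ioo (0:ℝ) 1) (hp : 0 < p)
    (C : ℝ) (hC : C = if 1 < p then c ^ (p - 1) else (l + c) ^ (p - 1))
    (α : ℝ → ℝ → ℝ) (β : ℝ → ℝ)
    (hαnonneg : ∀ t ≥ (0:ℝ), ∀ y, 0 ≤ y → 0 ≤ α t y)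
    (hαmono : ∀ t ≥ (0:ℝ), ∀ y z, 0 ≤ y → y ≤ z → α t y ≤ α t z)
    (hαcont : ∀ y, 0 ≤ y → ContinuousOn (fun t => α t y) (Ici (0:ℝ)))
    (hβnonneg : ∀ t ≥ (0:ℝ), 0 ≤ β t)
    (hβcont : ContinuousOn β (Ici (0:ℝ)))
    (hα : ∀ t ≥ (0:ℝ), ∀ y : ℝ,
      α t y ≤ θ * C * |y| ^ p * (b * l / ((l + c) * (1 + t) ^ (1 + b))))
    (hβ : ∀ t ≥ (0:ℝ), β t ≤ (1 - θ) * (b * l / ((c + l) ^ 2 * (1 + t) ^ (1 + b))))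
    (g g' : ℝ → ℝ)
    (hgnonneg : ∀ t ≥ (0:ℝ), 0 ≤ g t)
    (hg : ∀ t ≥ (0:ℝ), HasDerivAt g (g' t) t)
    (hineq : ∀ t ≥ (0:ℝ), g' t ≤ α t (g t) + β t)
    (hinit : g 0 < 1 / (c + l)) :
    ∀ t > (0:ℝ), g t ≤ 1 / (c + l * (1 + t) ^ (-b)) ∧ 1 / (c + l * (1 + t) ^ (-b)) < 1 / c := by
  obtain ⟨hθ0, hθ1⟩ := hθ
  set B : ℝ → ℝ := fun t => 1 / (c + l * (1 + t) ^ (-b)) with hBdef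
  set B' : ℝ → ℝ := fun t => b * l * (1 + t) ^ (-b - 1) / (c + l * (1 + t) ^ (-b)) ^ 2
    with hB'def
  -- basic facts about the denominator
  have hden : ∀ t : ℝ, 0 ≤ t → 0 < c + l * (1 + t) ^ (-b) := by
    intro t ht
    have : (0:ℝ) < (1 + t) ^ (-b) := Real.rpow_pos_of_pos (by linarith) _
    nlinarith
  have hdenle : ∀ t : ℝ, 0 ≤ t → c + l * (1 + t) ^ (-b) ≤ c + l := by
    intro t ht
    have : (1 + t) ^ (-b : ℝ) ≤ 1 :=
      Real.rpow_le_one_of_one_le_of_nonpos (by linarith) (by linarith)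
    nlinarith
  have hdenlt : ∀ t : ℝ, 0 < t → c + l * (1 + t) ^ (-b) < c + l := by
    intro t ht
    have : (1 + t) ^ (-b : ℝ) < 1 :=
      Real.rpow_lt_one_of_one_lt_of_neg (by linarith) (by linarith)
    nlinarith
  -- derivative of B
  have hBderiv : ∀ t : ℝ, 0 ≤ t → HasDerivAt B (B' t) t := by
    intro t ht
    have h1t : (0:ℝ) < 1 + t := by linarith
    have hd : HasDerivAt (fun s : ℝ => c + l * (1 + s) ^ (-b))
        (l * (1 * (-b) * (1 + t) ^ (-b - 1))) t := by
      exact ((((hasDerivAt_id t).const_add 1).rpow_const (Or.inl h1t.ne')).const_mul l).const_add c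
    have := hd.inv (ne_of_gt (hden t ht))
    simp only [hBdef, hB'def, one_div]
    exact this.congr_deriv (by ring)
  -- the comparison on [0, T]
  have hB0 : B 0 = 1 / (c + l) := by
    simp only [hBdef]
    norm_num
  have main : ∀ T : ℝ, 0 < T → ∀ x ∈ Icc (0:ℝ) T, g x ≤ B x := by
    intro T hT
    refine image_le_of_deriv_right_lt_deriv_boundary' (f' := g') (B' := B')
      ?_ ?_ ?_ ?_ ?_ ?_
    · intro x hx
      exact ((hg x hx.1).continuousAt).continuousWithinAt
    · intro x hx
      exact (hg x hx.1).hasDerivWithinAt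
    · rw [hB0]; exact hinit.le
    · intro x hx
      exact ((hBderiv x hx.1).continuousAt).continuousWithinAt
    · intro x hx
      exact (hBderiv x hx.1).hasDerivWithinAt
    · rintro x ⟨hx0, hxT⟩ hgB
      rcases eq_or_lt_of_le hx0 with rfl | hx0'
      · exfalso
        rw [hgB, hB0] at hinit
        exact lt_irrefl _ hinit
      -- x > 0
      have h1x : (0:ℝ) < 1 + x := by linarith
      set d : ℝ := c + l * (1 + x) ^ (-b) with hddef
      have hd0 : 0 < d := hden x hx0
      have hdlt : d < c + l := hdenlt x hx0'
      have hdgt : c < d := by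
        have : (0:ℝ) < l * (1 + x) ^ (-b) :=
          mul_pos hl (Real.rpow_pos_of_pos h1x _)
        simp only [hddef]; linarith
      set y : ℝ := 1 / d with hydef
      have hy0 : 0 < y := by positivity
      have hy1 : (l + c)⁻¹ ≤ y := by
        rw [hydef, one_div]
        exact inv_anti₀ hd0 (by linarith)
      have hy1' : (c + l)⁻¹ < y := by
        rw [hydef, one_div]
        exact inv_strictAnti₀ hd0 hdlt
      have hy2 : y ≤ c⁻¹ := by
        rw [hydef, one_div]
        exact (inv_anti₀ hc hdgt.le)
      have hBx : B x = y := rfl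
      have hkey : C * y ^ (p - 2) ≤ l + c := keylem15 c l p hc hl hp C hC y hy1 hy2
      set D : ℝ := (1 + x) ^ (1 + b) with hDdef
      have hD0 : 0 < D := Real.rpow_pos_of_pos h1x _
      have hC0 : 0 ≤ C := by
        rw [hC]; split_ifs <;> positivity
      -- the crucial scalar inequality
      have hyp2 : y ^ p = y ^ (p - 2) * y ^ (2:ℕ) := by
        rw [← Real.rpow_natCast y 2, ← Real.rpow_add hy0]
        norm_num
      have hsum : θ * C * y ^ p / (l + c) + (1 - θ) / (c + l) ^ 2 < y ^ (2:ℕ) := by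
        have P1 : θ * C * y ^ p / (l + c) ≤ θ * y ^ (2:ℕ) := by
          rw [hyp2]
          rw [div_le_iff₀ (by linarith : (0:ℝ) < l + c)]
          have hy2n : (0:ℝ) ≤ y ^ (2:ℕ) := by positivity
          calc θ * C * (y ^ (p - 2) * y ^ (2:ℕ))
              = θ * ((C * y ^ (p - 2)) * y ^ (2:ℕ)) := by ring
            _ ≤ θ * ((l + c) * y ^ (2:ℕ)) := by
                have := mul_le_mul_of_nonneg_right hkey hy2n
                nlinarith
            _ = θ * y ^ (2:ℕ) * (l + c) := by ring
        have P2 : (1 - θ) / (c + l) ^ 2 < (1 - θ) * y ^ (2:ℕ) := by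
          have hq : ((c + l)⁻¹) ^ (2:ℕ) < y ^ (2:ℕ) := by
            apply pow_lt_pow_left₀ hy1' (by positivity)
            norm_num
          have : (1:ℝ) / (c + l) ^ 2 = ((c + l)⁻¹) ^ (2:ℕ) := by
            rw [one_div, inv_pow]
          calc (1 - θ) / (c + l) ^ 2 = (1 - θ) * (((c + l)⁻¹) ^ (2:ℕ)) := by
                rw [div_eq_mul_one_div, this]
            _ < (1 - θ) * y ^ (2:ℕ) := by
                exact mul_lt_mul_of_pos_left hq (by linarith)
        nlinarith
      -- assemble
      have hgx0 : g x ≥ 0 := hgnonneg x hx0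
      have habs : |g x| = y := by rw [hgB, hBx, abs_of_pos hy0]
      have hne1 : (l + c) ≠ 0 := by positivity
      have hne2 : (c + l) ≠ 0 := by positivity
      have hDne : D ≠ 0 := ne_of_gt hD0
      have hdne : d ≠ 0 := ne_of_gt hd0
      have hB'eq : B' x = y ^ (2:ℕ) * (b * l / D) := by
        simp only [hB'def]
        have hneg : (1 + x) ^ (-b - 1 : ℝ) = D⁻¹ := by
          rw [show (-b - 1 : ℝ) = -(1 + b) by ring, Real.rpow_neg h1x.le, hDdef]
        rw [hneg, hydef]
        rw [show (c + l * (1 + x) ^ (-b)) = d from rfl]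
        field_simp
      calc g' x ≤ α x (g x) + β x := hineq x hx0
        _ ≤ θ * C * |g x| ^ p * (b * l / ((l + c) * D)) +
            (1 - θ) * (b * l / ((c + l) ^ 2 * D)) :=
          add_le_add (hα x hx0 (g x)) (hβ x hx0)
        _ = (θ * C * y ^ p / (l + c) + (1 - θ) / (c + l) ^ 2) * (b * l / D) := by
          rw [habs]; field_simp
        _ < y ^ (2:ℕ) * (b * l / D) := by
          apply mul_lt_mul_of_pos_right hsum (by positivity)
        _ = B' x := hB'eq.symm
  intro t ht
  constructor
  · exact main t ht t ⟨ht.le, le_refl t⟩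
  · rw [one_div, one_div]
    apply inv_strictAnti₀ hc
    have : (0:ℝ) < l * (1 + t) ^ (-b) := mul_pos hl (Real.rpow_pos_of_pos (by linarith) _)
    linarith
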